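/- arXiv:2305.01745 — 3 statements merged into one kernel-verified Lean document; each statement's English description precedes it below -/
import Mathlib

section
/- For any integer n ≥ 2 and any A > 0, there exists f ∈ C² ∩ Δ^(0)({0}) such that, for every polynomial P_n of degree ≤ n with P_n ∈ Δ^(0)({0}) and satisfying P_n^(i)(0) = f^(i)(0) for all 0 ≤ i ≤ 2, one has ‖f - P_n‖ > A ‖f''‖. Hence copositive approximation with second-order Hermite interpolation at the sign-change point 0 is impossible for f ∈ C². -/
open Polynomial Finset
section helpers

noncomputable def coeffSum (q : ℝ[X]) : ℝ := ∑ k ∈ Finset.range (q.natDegree + 4), |q.coeff k|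

lemma coeffSum_nonneg (q : ℝ[X]) : 0 ≤ coeffSum q :=
  Finset.sum_nonneg fun _ _ => abs_nonneg _

lemma taylor_tail_bound (q : ℝ[X]) {y : ℝ} (hy0 : 0 ≤ y) (hy1 : y ≤ 1) :
    |q.eval y - q.coeff 0 - q.coeff 1 * y - q.coeff 2 * y ^ 2| ≤ y ^ 3 * coeffSum q := by
  set m := q.natDegree + 4 with hm
  have hdm : q.natDegree < m := by omega
  have hsplit : (∑ k ∈ Finset.range m, q.coeff k * y ^ k)
      = (∑ k ∈ Finset.range 3, q.coeff k * y ^ k) + ∑ k ∈ Finset.Ico 3 m, q.coeff k * y ^ k := by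
    simp only [Finset.range_eq_Ico]
    exact (Finset.sum_Ico_consecutive _ (by omega : 0 ≤ 3) (by omega : 3 ≤ m)).symm
  have h3 : (∑ k ∈ Finset.range 3, q.coeff k * y ^ k)
      = q.coeff 0 + q.coeff 1 * y + q.coeff 2 * y ^ 2 := by
    simp [Finset.sum_range_succ]
  rw [Polynomial.eval_eq_sum_range' hdm, hsplit, h3]
  have h1 : |q.coeff 0 + q.coeff 1 * y + q.coeff 2 * y ^ 2
      + (∑ k ∈ Finset.Ico 3 m, q.coeff k * y ^ k)
      - q.coeff 0 - q.coeff 1 * y - q.coeff 2 * y ^ 2|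
      = |∑ k ∈ Finset.Ico 3 m, q.coeff k * y ^ k| := by congr 1; ring
  rw [h1]
  calc |∑ k ∈ Finset.Ico 3 m, q.coeff k * y ^ k|
      ≤ ∑ k ∈ Finset.Ico 3 m, |q.coeff k * y ^ k| := Finset.abs_sum_le_sum_abs _ _
    _ ≤ ∑ k ∈ Finset.Ico 3 m, |q.coeff k| * y ^ 3 := by
        refine Finset.sum_le_sum fun k hk => ?_
        rw [abs_mul, abs_pow, abs_of_nonneg hy0]
        exact mul_le_mul_of_nonneg_left
          (pow_le_pow_of_le_one hy0 hy1 (Finset.mem_Ico.mp hk).1) (abs_nonneg _)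
    _ ≤ ∑ k ∈ Finset.range m, |q.coeff k| * y ^ 3 := by
        refine Finset.sum_le_sum_of_subset_of_nonneg ?_ fun k _ _ => by positivity
        rw [Finset.range_eq_Ico]
        exact Finset.Ico_subset_Ico (by omega) le_rfl
    _ = y ^ 3 * coeffSum q := by rw [coeffSum, ← Finset.sum_mul]; ring

lemma one_sub_cos_le {u : ℝ} (hu : 0 ≤ u) : 1 - Real.cos u ≤ u := by
  rcases le_or_gt u 2 with h | h
  · nlinarith [Real.one_sub_sq_div_two_le_cos (x := u)]
  · nlinarith [Real.neg_one_le_cos u]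

end helpers

/-- The sup norm of `g` on `[a,b]`. -/
noncomputable def supNorm (g : ℝ → ℝ) (a b : ℝ) : ℝ :=
  sSup ((fun x => |g x|) '' Set.Icc a b)

/-- `g ∈ Δ^(0)({0})`: `g ≤ 0` on `[-1,0]` and `g ≥ 0` on `[0,1]`. -/
def Delta0Zero (g : ℝ → ℝ) : Prop :=
  (∀ x ∈ Set.Icc (-1 : ℝ) 0, g x ≤ 0) ∧ (∀ x ∈ Set.Icc (0 : ℝ) 1, 0 ≤ g x)

set_option maxHeartbeats 1000000 in
/-- Copositive approximation with interpolation at `Y_s = {0}`, negative result for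
`f ∈ C²` with second-order interpolation: for any `n ≥ 2` and `A > 0`, there is
`f ∈ C²[-1,1] ∩ Δ^(0)({0})` such that any polynomial of degree ≤ n in `Δ^(0)({0})`
with `P_n^{(i)}(0) = f^{(i)}(0)` for `0 ≤ i ≤ 2` satisfies `‖f - P_n‖ > A ‖f''‖`. -/
theorem statement16 (n : ℕ) (hn : 2 ≤ n) (A : ℝ) (hA : 0 < A) :
    ∃ f : ℝ → ℝ, ContDiffOn ℝ 2 f (Set.Icc (-1 : ℝ) 1) ∧ Delta0Zero f ∧
      ∀ P : Polynomial ℝ, P.natDegree ≤ n →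
        Delta0Zero (fun x => P.eval x) →
        (∀ i : ℕ, i ≤ 2 → (Polynomial.derivative^[i] P).eval 0
            = iteratedDerivWithin i f (Set.Icc (-1 : ℝ) 1) 0) →
        A * supNorm (iteratedDerivWithin 2 f (Set.Icc (-1 : ℝ) 1)) (-1) 1
          < supNorm (fun x => f x - P.eval x) (-1) 1 := by
  set I : Set ℝ := Set.Icc (-1 : ℝ) 1 with hI
  have hu : UniqueDiffOn ℝ I := uniqueDiffOn_Icc (by norm_num)
  -- Lagrange nodes
  set s : Finset ℕ := Finset.range (n + 1) with hs
  set v : ℕ → ℝ := fun j => (j : ℝ) / n with hv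
  have hn0 : (n : ℝ) ≠ 0 := by positivity
  have hinj : Set.InjOn v s := by
    intro i _ j _ h
    have h : (i:ℝ) / n = (j:ℝ) / n := h
    rw [div_left_inj' hn0] at h
    exact_mod_cast h
  set b : ℕ → ℝ[X] := fun j => Lagrange.basis s v j with hb
  set K : ℝ := ∑ j ∈ s, coeffSum (b j) with hK
  have hK0 : 0 ≤ K := Finset.sum_nonneg fun j _ => coeffSum_nonneg _
  -- the small parameter
  set M : ℝ := 1 / (32 * (A + 3) * (K + 1)) with hM
  have hMden : (0:ℝ) < 32 * (A + 3) * (K + 1) :=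
    mul_pos (mul_pos (by norm_num) (by linarith)) (by linarith)
  have hM0 : 0 < M := by rw [hM]; exact one_div_pos.mpr hMden
  have hMeq : M * (32 * (A + 3) * (K + 1)) = 1 := by
    rw [hM]; field_simp
  have h96 : (4:ℝ) ≤ 32 * (A + 3) * (K + 1) := by nlinarith [mul_nonneg hA.le hK0]
  have hM4 : 4 * M ≤ 1 := by
    calc 4 * M ≤ (32 * (A + 3) * (K + 1)) * M :=
          mul_le_mul_of_nonneg_right h96 hM0.le
      _ = 1 := by rw [mul_comm]; exact hMeq
  have hM1 : M ≤ 1 := by linarith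
  have hMne : M ≠ 0 := ne_of_gt hM0
  clear_value K
  -- the function
  set f : ℝ → ℝ := fun x => M * x - M ^ 2 * (1 - Real.cos (x / M)) with hf
  have hfd : ∀ x : ℝ, HasDerivAt f (M - M * Real.sin (x / M)) x := by
    intro x
    have h1 : HasDerivAt (fun x : ℝ => x / M) (1 / M) x := (hasDerivAt_id x).div_const M
    have h2 : HasDerivAt (fun x : ℝ => Real.cos (x / M)) (-Real.sin (x / M) * (1 / M)) x := h1.cos
    have h3 : HasDerivAt (fun x : ℝ => 1 - Real.cos (x / M))
        (0 - -Real.sin (x / M) * (1 / M)) x := (hasDerivAt_const x (1:ℝ)).sub h2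
    have h4 := ((hasDerivAt_id x).const_mul M).sub (h3.const_mul (M ^ 2))
    refine h4.congr_deriv ?_
    have hMM : M ^ 2 * (1 / M) = M := by rw [pow_two, mul_assoc, mul_one_div_cancel hMne, mul_one]
    rw [mul_one, neg_mul, zero_sub, neg_neg, mul_comm (Real.sin (x / M)) (1 / M), ← mul_assoc, hMM]
  have hgd : ∀ x : ℝ, HasDerivAt (fun y => M - M * Real.sin (y / M)) (-Real.cos (x / M)) x := by
    intro x
    have h1 : HasDerivAt (fun x : ℝ => x / M) (1 / M) x := (hasDerivAt_id x).div_const M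
    have h2 := (hasDerivAt_const x M).sub ((h1.sin).const_mul M)
    refine h2.congr_deriv ?_
    have hMM : M * (1 / M) = 1 := mul_one_div_cancel hMne
    rw [zero_sub, mul_comm (Real.cos (x / M)) (1 / M), ← mul_assoc, hMM, one_mul]
  have hfc : Continuous f := by
    apply Continuous.sub (continuous_const.mul continuous_id)
    exact continuous_const.mul (Continuous.sub continuous_const
      (Real.continuous_cos.comp (continuous_id.div_const M)))
  clear_value f
  -- iterated derivatives
  have hd1 : ∀ x ∈ I, iteratedDerivWithin 1 f I x = M - M * Real.sin (x / M) := by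
    intro x hx
    rw [iteratedDerivWithin_one]
    exact ((hfd x).hasDerivWithinAt).derivWithin (hu x hx)
  have hd2 : ∀ x ∈ I, iteratedDerivWithin 2 f I x = -Real.cos (x / M) := by
    intro x hx
    rw [show (2:ℕ) = 1 + 1 from rfl, iteratedDerivWithin_succ]
    have hg : HasDerivWithinAt (iteratedDerivWithin 1 f I) (-Real.cos (x / M)) I x :=
      ((hgd x).hasDerivWithinAt).congr (fun y hy => hd1 y hy) (hd1 x hx)
    exact hg.derivWithin (hu x hx)
  have h0I : (0:ℝ) ∈ I := by constructor <;> norm_num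
  have hf0 : f 0 = 0 := by simp [hf]
  have hid0 : iteratedDerivWithin 0 f I 0 = 0 := by
    rw [iteratedDerivWithin_zero]; exact hf0
  have hid1 : iteratedDerivWithin 1 f I 0 = M := by
    rw [hd1 0 h0I]; simp
  have hid2 : iteratedDerivWithin 2 f I 0 = -1 := by
    rw [hd2 0 h0I]; simp
  -- sup norm of second derivative
  have hsup2 : supNorm (iteratedDerivWithin 2 f I) (-1) 1 ≤ 1 := by
    apply Real.sSup_le _ zero_le_one
    rintro y ⟨x, hx, rfl⟩
    show |iteratedDerivWithin 2 f I x| ≤ 1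
    rw [hd2 x hx, abs_neg]
    exact Real.abs_cos_le_one _
  clear_value M
  refine ⟨f, ?_, ?_, ?_⟩
  · -- smoothness
    have : ContDiff ℝ 2 f := by
      rw [hf]
      apply ContDiff.sub (contDiff_const.mul contDiff_id)
      exact contDiff_const.mul (ContDiff.sub contDiff_const
        (Real.contDiff_cos.comp (contDiff_id.div_const M)))
    exact this.contDiffOn
  · -- copositivity of f
    constructor
    · intro x hx
      have h1 : Real.cos (x / M) ≤ 1 := Real.cos_le_one _
      have h2 : M * x ≤ 0 := mul_nonpos_of_nonneg_of_nonpos hM0.le hx.2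
      simp only [hf]
      nlinarith [mul_nonneg (sq_nonneg M) (by linarith : (0:ℝ) ≤ 1 - Real.cos (x / M))]
    · intro x hx
      have hxM : 0 ≤ x / M := div_nonneg hx.1 hM0.le
      have h1 : 1 - Real.cos (x / M) ≤ x / M := one_sub_cos_le hxM
      have h2 : M ^ 2 * (1 - Real.cos (x / M)) ≤ M ^ 2 * (x / M) :=
        mul_le_mul_of_nonneg_left h1 (sq_nonneg M)
      have h3 : M ^ 2 * (x / M) = M * x := by field_simp
      simp only [hf]
      linarith
  · -- main estimate
    intro P hdeg hcop hint
    by_contra hcon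
    push_neg at hcon
    -- interpolation data
    have hP0 : P.eval 0 = 0 := by
      have := hint 0 (by norm_num); simpa [hid0] using this
    have hP1 : (derivative P).eval 0 = M := by
      have := hint 1 (by norm_num); simpa [hid1] using this
    have hP2 : (derivative (derivative P)).eval 0 = -1 := by
      have := hint 2 (by norm_num)
      rw [hid2] at this
      simpa [Function.iterate_succ, Function.comp] using this
    have hc0 : P.coeff 0 = 0 := by rw [Polynomial.coeff_zero_eq_eval_zero]; exact hP0
    have hc1 : P.coeff 1 = M := by
      have h := Polynomial.coeff_zero_eq_eval_zero (derivative P)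
      rw [hP1, Polynomial.coeff_derivative] at h
      simpa using h
    have hc2 : P.coeff 2 = -(1/2) := by
      have h := Polynomial.coeff_zero_eq_eval_zero (derivative (derivative P))
      rw [hP2, Polynomial.coeff_derivative, Polynomial.coeff_derivative] at h
      push_cast at h
      linarith
    -- Lagrange representation
    have hdeg' : P.degree < (#s : WithBot ℕ) := by
      rw [hs, Finset.card_range]
      exact lt_of_le_of_lt Polynomial.degree_le_natDegree
        (by exact_mod_cast Nat.lt_succ_of_le hdeg)
    have hrep : P = ∑ j ∈ s, Polynomial.C (P.eval (v j)) * b j := by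
      have := Lagrange.eq_interpolate hinj hdeg'
      rwa [Lagrange.interpolate_apply] at this
    set c : ℕ → ℝ := fun j => P.eval (v j) with hc
    -- linearity of the "Taylor tail at 4M" functional
    set y : ℝ := 4 * M with hy
    have hy0 : 0 ≤ y := by rw [hy]; linarith
    have hy1 : y ≤ 1 := hM4
    have heval : P.eval y = ∑ j ∈ s, c j * (b j).eval y := by
      conv_lhs => rw [hrep]
      rw [Polynomial.eval_finset_sum]
      exact Finset.sum_congr rfl fun j _ => by rw [Polynomial.eval_mul, Polynomial.eval_C]
    have hcoeff : ∀ k : ℕ, P.coeff k = ∑ j ∈ s, c j * (b j).coeff k := by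
      intro k
      conv_lhs => rw [hrep]
      rw [Polynomial.finset_sum_coeff]
      exact Finset.sum_congr rfl fun j _ => by rw [Polynomial.coeff_C_mul]
    have hE : P.eval y - P.coeff 0 - P.coeff 1 * y - P.coeff 2 * y ^ 2
        = ∑ j ∈ s, c j * ((b j).eval y - (b j).coeff 0 - (b j).coeff 1 * y
            - (b j).coeff 2 * y ^ 2) := by
      rw [heval, hcoeff 0, hcoeff 1, hcoeff 2, Finset.sum_mul, Finset.sum_mul,
        ← Finset.sum_sub_distrib, ← Finset.sum_sub_distrib, ← Finset.sum_sub_distrib]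
      exact Finset.sum_congr rfl fun j _ => by ring
    -- lower bound for the tail
    have hPy : 0 ≤ P.eval y := hcop.2 y ⟨hy0, hy1⟩
    have hlow : 4 * M ^ 2 ≤ P.eval y - P.coeff 0 - P.coeff 1 * y - P.coeff 2 * y ^ 2 := by
      rw [hc0, hc1, hc2]
      rw [hy] at hPy ⊢
      nlinarith [hPy]
    -- upper bound for node values
    have hsupA : supNorm (fun x => f x - P.eval x) (-1) 1 ≤ A := by
      calc supNorm (fun x => f x - P.eval x) (-1) 1
          ≤ A * supNorm (iteratedDerivWithin 2 f I) (-1) 1 := hcon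
        _ ≤ A * 1 := mul_le_mul_of_nonneg_left hsup2 hA.le
        _ = A := mul_one A
    have hbdd : BddAbove ((fun x => |f x - P.eval x|) '' Set.Icc (-1:ℝ) 1) :=
      IsCompact.bddAbove_image isCompact_Icc
        (((hfc.sub P.continuous).abs).continuousOn)
    have hpt : ∀ x ∈ Set.Icc (-1:ℝ) 1, |f x - P.eval x| ≤ A := by
      intro x hx
      exact le_trans (le_csSup hbdd ⟨x, hx, rfl⟩) hsupA
    have hfb : ∀ x ∈ Set.Icc (-1:ℝ) 1, |f x| ≤ 3 := by
      intro x hx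
      have h1 := Real.neg_one_le_cos (x / M)
      have h2 := Real.cos_le_one (x / M)
      rw [abs_le]
      have hM2 : M * M ≤ 1 := by nlinarith
      constructor <;> simp only [hf] <;>
        nlinarith [mul_nonneg hM0.le (by linarith [hx.1] : (0:ℝ) ≤ x + 1),
          mul_nonneg hM0.le (by linarith [hx.2] : (0:ℝ) ≤ 1 - x),
          mul_nonneg (sq_nonneg M) (by linarith : (0:ℝ) ≤ 1 - Real.cos (x / M)),
          mul_nonneg (sq_nonneg M) (by linarith : (0:ℝ) ≤ Real.cos (x / M) + 1)]
    have hvmem : ∀ j ∈ s, v j ∈ Set.Icc (-1:ℝ) 1 := by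
      intro j hj
      rw [hs, Finset.mem_range] at hj
      have hj' : (j:ℝ) ≤ n := by exact_mod_cast Nat.lt_succ_iff.mp hj
      have hnpos : (0:ℝ) < n := by positivity
      constructor
      · have : 0 ≤ (j:ℝ) / n := by positivity
        linarith
      · rw [hv]; exact div_le_one_of_le₀ hj' hnpos.le
    have hcj : ∀ j ∈ s, |c j| ≤ A + 3 := by
      intro j hj
      have h1 := hpt (v j) (hvmem j hj)
      have h2 := hfb (v j) (hvmem j hj)
      have : |c j| = |f (v j) - (f (v j) - P.eval (v j))| := by rw [hc]; congr 1; ring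
      rw [this]
      calc |f (v j) - (f (v j) - P.eval (v j))| ≤ |f (v j)| + |f (v j) - P.eval (v j)| :=
            abs_sub _ _
        _ ≤ 3 + A := add_le_add h2 h1
        _ = A + 3 := by ring
    -- the contradiction
    have hup : P.eval y - P.coeff 0 - P.coeff 1 * y - P.coeff 2 * y ^ 2
        ≤ (A + 3) * (y ^ 3 * K) := by
      rw [hE]
      calc (∑ j ∈ s, c j * ((b j).eval y - (b j).coeff 0 - (b j).coeff 1 * y
            - (b j).coeff 2 * y ^ 2))
          ≤ ∑ j ∈ s, (A + 3) * (y ^ 3 * coeffSum (b j)) := by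
            refine Finset.sum_le_sum fun j hj => ?_
            calc c j * ((b j).eval y - (b j).coeff 0 - (b j).coeff 1 * y
                  - (b j).coeff 2 * y ^ 2)
                ≤ |c j * ((b j).eval y - (b j).coeff 0 - (b j).coeff 1 * y
                  - (b j).coeff 2 * y ^ 2)| := le_abs_self _
              _ = |c j| * |(b j).eval y - (b j).coeff 0 - (b j).coeff 1 * y
                  - (b j).coeff 2 * y ^ 2| := abs_mul _ _
              _ ≤ (A + 3) * (y ^ 3 * coeffSum (b j)) := by
                  apply mul_le_mul (hcj j hj) (taylor_tail_bound (b j) hy0 hy1)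
                    (abs_nonneg _) (by linarith)
        _ = (A + 3) * (y ^ 3 * K) := by
            rw [hK, ← Finset.mul_sum, ← Finset.mul_sum]
    have hy3 : y ^ 3 = 64 * M ^ 3 := by rw [hy]; ring
    rw [hy3] at hup
    have hfinal : 4 * M ^ 2 ≤ (A + 3) * (64 * M ^ 3 * K) := le_trans hlow hup
    nlinarith [mul_pos hM0 hM0, mul_pos (mul_pos hM0 hM0) hM0,
      mul_nonneg (mul_nonneg hM0.le hM0.le) hK0]
end

section
/- Let r ≥ 3 be an ODD integer. Then for any n ≥ r and any A > 0, there exists f ∈ C^r ∩ Δ^(0)({0}) such that, for every polynomial P_n of degree ≤ n which satisfies P_n ≤ 0 on (-1/n, 0) and P_n^(i)(0) = f^(i)(0) for all 0 ≤ i ≤ r, one has ‖f - P_n‖ > A ‖f^(r)‖. Hence copositive approximation with Hermite interpolation of full order r at the sign-change point 0 is impossible for odd r ≥ 3. -/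
open Polynomial Set

noncomputable def Tstep (q : Polynomial ℝ) : Polynomial ℝ :=
  derivative q - C 2 * (X * q)

lemma hasDerivAt_poly_exp (q : Polynomial ℝ) (t : ℝ) :
    HasDerivAt (fun s : ℝ => q.eval s * Real.exp (-(s ^ 2)))
      ((Tstep q).eval t * Real.exp (-(t ^ 2))) t := by
  have h1 : HasDerivAt (fun s : ℝ => q.eval s) (q.derivative.eval t) t := q.hasDerivAt t
  have h2 : HasDerivAt (fun s : ℝ => -(s ^ 2)) (-(2 * t)) t := by
    simpa using (hasDerivAt_pow 2 t).fun_neg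
  have h3 := h2.exp
  have h4 : HasDerivAt (fun s : ℝ => q.eval s * Real.exp (-(s ^ 2))) _ t := h1.fun_mul h3
  convert h4 using 1
  simp [Tstep]
  ring

lemma iteratedDeriv_poly_exp (m : ℕ) (q : Polynomial ℝ) :
    iteratedDeriv m (fun s : ℝ => q.eval s * Real.exp (-(s ^ 2))) =
      fun t => (Tstep^[m] q).eval t * Real.exp (-(t ^ 2)) := by
  induction m generalizing q with
  | zero => simp
  | succ m ih =>
    rw [iteratedDeriv_succ']
    have hd : deriv (fun s : ℝ => q.eval s * Real.exp (-(s ^ 2)))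
        = fun s => (Tstep q).eval s * Real.exp (-(s ^ 2)) :=
      funext fun t => (hasDerivAt_poly_exp q t).deriv
    rw [hd, ih, Function.iterate_succ_apply]

lemma contDiff_poly_exp (q : Polynomial ℝ) :
    ContDiff ℝ (⊤ : ℕ∞) (fun s : ℝ => q.eval s * Real.exp (-(s ^ 2))) := by
  apply ContDiff.mul
  · have : (fun s : ℝ => q.eval s)
        = fun s => ∑ i ∈ Finset.range (q.natDegree + 1), q.coeff i * s ^ i :=
      funext fun s => eval_eq_sum_range s
    rw [this]
    exact ContDiff.sum fun i _ => contDiff_const.mul (contDiff_id.pow i)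
  · exact Real.contDiff_exp.comp ((contDiff_id.pow 2).neg)

lemma Tpow_eval_zero (r : ℕ) :
    ∀ m, m ≤ r → ∃ s : Polynomial ℝ,
      Tstep^[m] (X ^ r) = X ^ (r - m) * s ∧ s.eval 0 = (r.descFactorial m : ℝ) := by
  intro m
  induction m with
  | zero => intro _; exact ⟨1, by simp, by simp⟩
  | succ m ih =>
    intro hmr
    obtain ⟨s, hs, he⟩ := ih (by omega)
    obtain ⟨k, hk⟩ : ∃ k, r - m = k + 1 := ⟨r - m - 1, by omega⟩
    refine ⟨C ((k : ℝ) + 1) * s + X * derivative s - C 2 * X ^ 2 * s, ?_, ?_⟩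
    · rw [Function.iterate_succ_apply', hs, hk]
      have hrm : r - (m + 1) = k := by omega
      rw [hrm]
      simp only [Tstep, derivative_mul, derivative_X_pow]
      push_cast
      ring
    · have hrm : r.descFactorial (m + 1) = (r - m) * r.descFactorial m :=
        Nat.descFactorial_succ r m
      simp only [eval_sub, eval_add, eval_mul, eval_C, eval_X, eval_pow, he]
      rw [hrm, hk]
      push_cast
      ring

lemma abs_pow_mul_exp_le (t : ℝ) (i : ℕ) :
    |t| ^ i * Real.exp (-(t ^ 2)) ≤ (i.factorial : ℝ) := by
  rcases le_or_gt (|t|) 1 with h | h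
  · have h1 : |t| ^ i ≤ 1 := pow_le_one₀ (abs_nonneg t) h
    have h2 : Real.exp (-(t ^ 2)) ≤ 1 :=
      Real.exp_le_one_iff.mpr (neg_nonpos.mpr (sq_nonneg t))
    have h3 : (1 : ℝ) ≤ i.factorial := by
      exact_mod_cast Nat.one_le_iff_ne_zero.mpr i.factorial_ne_zero
    nlinarith [Real.exp_pos (-(t ^ 2)), pow_nonneg (abs_nonneg t) i]
  · have hsingle : ((t ^ 2) ^ i / (i.factorial : ℝ))
        ≤ ∑ j ∈ Finset.range (i + 1), (t ^ 2) ^ j / (j.factorial : ℝ) := by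
      have := Finset.single_le_sum (f := fun j : ℕ => (t ^ 2) ^ j / (j.factorial : ℝ))
        (fun j _ => by positivity) (Finset.self_mem_range_succ i)
      exact this
    have key : (t ^ 2) ^ i / (i.factorial : ℝ) ≤ Real.exp (t ^ 2) :=
      hsingle.trans (Real.sum_le_exp_of_nonneg (sq_nonneg t) _)
    have h2 : |t| ^ i ≤ (t ^ 2) ^ i := by
      have habs : |t| ≤ t ^ 2 := by nlinarith [abs_nonneg t, sq_abs t]
      exact pow_le_pow_left₀ (abs_nonneg t) habs i
    rw [Real.exp_neg, mul_inv_le_iff₀ (Real.exp_pos _)]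
    have hfac : (0:ℝ) < (i.factorial : ℝ) := by positivity
    rw [div_le_iff₀ hfac] at key
    nlinarith [key, h2]

lemma poly_exp_bound (q : Polynomial ℝ) (t : ℝ) :
    |q.eval t * Real.exp (-(t ^ 2))|
      ≤ ∑ i ∈ Finset.range (q.natDegree + 1), |q.coeff i| * (i.factorial : ℝ) := by
  have he : q.eval t = ∑ i ∈ Finset.range (q.natDegree + 1), q.coeff i * t ^ i :=
    eval_eq_sum_range' (Nat.lt_succ_self _) t
  have hE : (0:ℝ) < Real.exp (-(t ^ 2)) := Real.exp_pos _
  calc |q.eval t * Real.exp (-(t ^ 2))|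
      = |∑ i ∈ Finset.range (q.natDegree + 1), q.coeff i * t ^ i| * Real.exp (-(t ^ 2)) := by
        rw [abs_mul, he, abs_of_pos hE]
    _ ≤ (∑ i ∈ Finset.range (q.natDegree + 1), |q.coeff i| * |t| ^ i) * Real.exp (-(t ^ 2)) := by
        apply mul_le_mul_of_nonneg_right _ hE.le
        refine le_trans (Finset.abs_sum_le_sum_abs _ _) ?_
        apply Finset.sum_le_sum
        intro i _
        rw [abs_mul, abs_pow]
    _ = ∑ i ∈ Finset.range (q.natDegree + 1), |q.coeff i| * (|t| ^ i * Real.exp (-(t ^ 2))) := by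
        rw [Finset.sum_mul]; congr 1; ext i; ring
    _ ≤ ∑ i ∈ Finset.range (q.natDegree + 1), |q.coeff i| * (i.factorial : ℝ) := by
        apply Finset.sum_le_sum
        intro i _
        exact mul_le_mul_of_nonneg_left (abs_pow_mul_exp_le t i) (abs_nonneg _)

lemma itDW_eq_itD (f : ℝ → ℝ) (hf : ContDiff ℝ (⊤ : ℕ∞) f) (i : ℕ) :
    ∀ x ∈ Icc (-1 : ℝ) 1, iteratedDerivWithin i f (Icc (-1 : ℝ) 1) x = iteratedDeriv i f x := by
  have hu : UniqueDiffOn ℝ (Icc (-1 : ℝ) 1) := uniqueDiffOn_Icc (by norm_num)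
  induction i with
  | zero => intro x _; simp
  | succ i ih =>
    intro x hx
    rw [iteratedDerivWithin_succ, iteratedDeriv_succ]
    rw [derivWithin_congr (fun y hy => ih y hy) (ih x hx)]
    apply DifferentiableAt.derivWithin _ (hu.uniqueDiffWithinAt hx)
    have hlt : (i : WithTop ℕ∞) < ((⊤ : ℕ∞) : WithTop ℕ∞) := by
      exact_mod_cast ENat.coe_lt_top i
    exact ((hf.differentiable_iteratedDeriv i hlt).differentiableAt :
        DifferentiableAt ℝ (iteratedDeriv i f) x)


set_option maxHeartbeats 1600000 in
/-- Copositive approximation with interpolation at `Y_s = {0}`, negative result for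
`f ∈ C^r` with odd `r ≥ 3`: for any `n ≥ r` and `A > 0`, there is
`f ∈ C^r[-1,1] ∩ Δ^(0)({0})` such that any polynomial of degree ≤ n, nonpositive on
`(-1/n, 0)`, with `P_n^{(i)}(0) = f^{(i)}(0)` for `0 ≤ i ≤ r`, satisfies
`‖f - P_n‖ > A ‖f^{(r)}‖`. -/
theorem statement17 (r : ℕ) (hr : 3 ≤ r) (hro : Odd r) (n : ℕ) (hn : r ≤ n)
    (A : ℝ) (hA : 0 < A) :
    ∃ f : ℝ → ℝ, ContDiffOn ℝ r f (Set.Icc (-1 : ℝ) 1) ∧ Delta0Zero f ∧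
      ∀ P : Polynomial ℝ, P.natDegree ≤ n →
        (∀ x ∈ Set.Ioo (-(1 / n) : ℝ) 0, P.eval x ≤ 0) →
        (∀ i : ℕ, i ≤ r → (Polynomial.derivative^[i] P).eval 0
            = iteratedDerivWithin i f (Set.Icc (-1 : ℝ) 1) 0) →
        A * supNorm (iteratedDerivWithin r f (Set.Icc (-1 : ℝ) 1)) (-1) 1
          < supNorm (fun x => f x - P.eval x) (-1) 1 := by
  obtain ⟨k, hk⟩ := hro
  have hk1 : 1 ≤ k := by omega
  have hn3 : 3 ≤ n := le_trans hr hn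
  have hnR : (3:ℝ) ≤ (n:ℝ) := by exact_mod_cast hn3
  -- the fixed polynomial q and constant G
  set q : Polynomial ℝ := Tstep^[r] (X ^ r) with hqdef
  set G : ℝ := ∑ i ∈ Finset.range (q.natDegree + 1), |q.coeff i| * (i.factorial : ℝ) with hGdef
  have hG0 : 0 ≤ G := Finset.sum_nonneg fun i _ => mul_nonneg (abs_nonneg _) (by positivity)
  set B : ℝ := A * G + 1 with hBdef
  have hB1 : (1:ℝ) ≤ B := by nlinarith
  have hB0 : (0:ℝ) < B := by linarith
  -- Lagrange nodes and constant K
  set sN : Finset ℕ := Finset.range (n + 1) with hsNdef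
  set v : ℕ → ℝ := fun i => (i : ℝ) / (n + 1) with hvdef
  set K : ℝ := ∑ j ∈ Finset.range (n + 1), ∑ i ∈ sN, |(Lagrange.basis sN v i).coeff j| with hKdef
  have hK0 : 0 ≤ K :=
    Finset.sum_nonneg fun j _ => Finset.sum_nonneg fun i _ => abs_nonneg _
  -- the small parameter h
  set h : ℝ := min (1 / (2 * n)) (1 / (2 * B * (K + 1))) with hhdef
  have hh0 : 0 < h := by
    apply lt_min <;> positivity
  have hh1n : h < 1 / n := by
    have h1 : h ≤ 1 / (2 * n) := min_le_left _ _
    have h2 : 1 / (2 * (n:ℝ)) < 1 / n := by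
      rw [div_lt_div_iff₀ (by positivity) (by positivity)]
      nlinarith
    linarith
  have hh1 : h ≤ 1 := by
    have h1 : h ≤ 1 / (2 * n) := min_le_left _ _
    have : 1 / (2 * (n:ℝ)) ≤ 1 := by
      rw [div_le_one (by positivity)]; nlinarith
    linarith
  have hhB : h * (B * (K + 1)) ≤ 1 / 2 := by
    have h1 : h ≤ 1 / (2 * B * (K + 1)) := min_le_right _ _
    calc h * (B * (K + 1)) ≤ (1 / (2 * B * (K + 1))) * (B * (K + 1)) :=
          mul_le_mul_of_nonneg_right h1 (by positivity)
      _ = 1 / 2 := by field_simp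
  -- δ and a
  set δ : ℝ := h ^ (r - 1) / 2 with hδdef
  have hδ0 : 0 < δ := by positivity
  set m : ℕ := (r - 1).factorial with hmdef
  have hm1 : (1:ℝ) ≤ (m:ℝ) := by
    exact_mod_cast Nat.one_le_iff_ne_zero.mpr (r - 1).factorial_ne_zero
  set a : ℝ := h / (2 * m) with hadef
  have ha0 : 0 < a := by positivity
  have hax : ∀ x : ℝ, a * (a⁻¹ * x) = x := by
    intro x; field_simp
  -- the function f
  set u : ℝ → ℝ := fun t => t ^ r * Real.exp (-(t ^ 2)) with hudef
  set f : ℝ → ℝ := fun x => δ * x + -(a ^ r) * u (a⁻¹ * x) with hfdef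
  have hu_eq : u = fun t => (X ^ r : Polynomial ℝ).eval t * Real.exp (-(t ^ 2)) := by
    funext t; simp [hudef]
  have hu_smooth : ContDiff ℝ (⊤ : ℕ∞) u := by
    rw [hu_eq]; exact contDiff_poly_exp _
  have hl_smooth : ContDiff ℝ (⊤ : ℕ∞) (fun x : ℝ => δ * x) := contDiff_const.mul contDiff_id
  have hw_smooth : ContDiff ℝ (⊤ : ℕ∞) (fun x : ℝ => -(a ^ r) * u (a⁻¹ * x)) :=
    contDiff_const.mul (hu_smooth.comp (contDiff_const.mul contDiff_id))
  have hf_smooth : ContDiff ℝ (⊤ : ℕ∞) f := hl_smooth.add hw_smooth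
  -- pointwise formula
  have hpoint : ∀ x : ℝ, f x = δ * x - x ^ r * Real.exp (-(a⁻¹ * x) ^ 2) := by
    intro x
    have h1 : a ^ r * (a⁻¹ * x) ^ r = x ^ r := by rw [← mul_pow, hax]
    simp only [hfdef, hudef]
    rw [show -(a ^ r) * ((a⁻¹ * x) ^ r * Real.exp (-(a⁻¹ * x) ^ 2))
        = -((a ^ r * (a⁻¹ * x) ^ r) * Real.exp (-(a⁻¹ * x) ^ 2)) by ring, h1]
    ring
  have hfactor : ∀ x : ℝ, f x = x * (δ - x ^ (r - 1) * Real.exp (-(a⁻¹ * x) ^ 2)) := by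
    intro x
    rw [hpoint x]
    have h1 : x ^ r = x * x ^ (r - 1) := by
      conv_lhs => rw [show r = (r - 1) + 1 by omega]
      rw [pow_succ']
    rw [h1]; ring
  have hEb : ∀ x ∈ Set.Icc (-1:ℝ) 1, x ^ (r - 1) * Real.exp (-(a⁻¹ * x) ^ 2) ≤ δ := by
    intro x hx
    have h1 : x ^ (r - 1) = a ^ (r - 1) * (a⁻¹ * x) ^ (r - 1) := by
      rw [← mul_pow, hax]
    have h2 : (a⁻¹ * x) ^ (r - 1) = |a⁻¹ * x| ^ (r - 1) :=
      ((Even.pow_abs ⟨k, by omega⟩ _)).symm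
    have h3 : |a⁻¹ * x| ^ (r - 1) * Real.exp (-(a⁻¹ * x) ^ 2) ≤ (m : ℝ) := by
      rw [hmdef]; exact abs_pow_mul_exp_le _ _
    have h4 : x ^ (r - 1) * Real.exp (-(a⁻¹ * x) ^ 2) ≤ a ^ (r - 1) * m := by
      rw [h1, h2, mul_assoc]
      apply mul_le_mul_of_nonneg_left h3 (by positivity)
    have h5 : a ^ (r - 1) * (m:ℝ) ≤ δ := by
      have hM1 : (1:ℝ) ≤ 2 * (m:ℝ) := by linarith
      have hM0 : (0:ℝ) < 2 * (m:ℝ) := by linarith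
      have h6 : (2 * (m:ℝ)) ≤ (2 * (m:ℝ)) ^ (r - 1) := by
        conv_lhs => rw [← pow_one (2 * (m:ℝ))]
        exact pow_le_pow_right₀ hM1 (by omega)
      have h8 : a ^ (r - 1) * (m:ℝ) = h ^ (r - 1) * m / (2 * (m:ℝ)) ^ (r - 1) := by
        rw [hadef, div_pow]; ring
      have h9 : h ^ (r - 1) * m / (2 * (m:ℝ)) ^ (r - 1) ≤ h ^ (r - 1) * m / (2 * (m:ℝ)) :=
        div_le_div_of_nonneg_left (by positivity) hM0 h6
      have h10 : h ^ (r - 1) * (m:ℝ) / (2 * (m:ℝ)) = h ^ (r - 1) / 2 := by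
        rw [mul_div_assoc]
        congr 1
        rw [div_eq_iff hM0.ne']
        ring_nf
      rw [h8, hδdef]
      rw [h10] at h9
      exact h9
    linarith
  refine ⟨f, ?_, ?_, ?_⟩
  · exact (hf_smooth.of_le (by exact_mod_cast (le_top : (r : ℕ∞) ≤ ⊤))).contDiffOn
  · constructor
    · intro x hx
      have hx' : x ∈ Set.Icc (-1:ℝ) 1 := ⟨hx.1, le_trans hx.2 (by norm_num)⟩
      rw [hfactor x]
      have := hEb x hx'
      nlinarith [mul_nonneg (neg_nonneg.mpr hx.2)
        (sub_nonneg.mpr (hEb x hx'))]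
    · intro x hx
      have hx' : x ∈ Set.Icc (-1:ℝ) 1 := ⟨le_trans (by norm_num) hx.1, hx.2⟩
      rw [hfactor x]
      exact mul_nonneg hx.1 (sub_nonneg.mpr (hEb x hx'))
  intro P hPdeg hPneg hPmatch
  by_contra hcon
  push_neg at hcon
  have h0mem : (0:ℝ) ∈ Set.Icc (-1:ℝ) 1 := by norm_num
  -- iterated derivatives of f
  have hcastle : ∀ i : ℕ, ((i : ℕ∞) : WithTop ℕ∞) ≤ ((⊤ : ℕ∞) : WithTop ℕ∞) := by
    intro i; exact_mod_cast (le_top : (i : ℕ∞) ≤ ⊤)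
  have hscale : ∀ i : ℕ, iteratedDeriv i (fun x => u (a⁻¹ * x))
      = fun x => (a⁻¹) ^ i * iteratedDeriv i u (a⁻¹ * x) := by
    intro i
    exact iteratedDeriv_comp_const_mul (hu_smooth.of_le (hcastle i)) a⁻¹
  have hu_deriv : ∀ i : ℕ, iteratedDeriv i u
      = fun t => (Tstep^[i] (X ^ r : Polynomial ℝ)).eval t * Real.exp (-(t ^ 2)) := by
    intro i; rw [hu_eq]; exact iteratedDeriv_poly_exp i _
  have hd1 : deriv (fun x : ℝ => δ * x) = fun _ => δ := by
    funext x; simpa using ((hasDerivAt_id x).const_mul δ).deriv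
  have hconstd : ∀ jj : ℕ, iteratedDeriv (jj + 1) (fun _ : ℝ => δ) = fun _ => 0 := by
    intro jj
    induction jj with
    | zero => rw [iteratedDeriv_one]; funext x; exact deriv_const x δ
    | succ jj ih =>
      rw [iteratedDeriv_succ, ih]; funext x; exact deriv_const x 0
  have hlderiv : ∀ i : ℕ, 2 ≤ i → iteratedDeriv i (fun x : ℝ => δ * x) = fun _ => 0 := by
    intro i hi
    obtain ⟨j, rfl⟩ : ∃ j, i = j + 1 + 1 := ⟨i - 2, by omega⟩
    rw [iteratedDeriv_succ', hd1]
    exact hconstd j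
  have hw_add : ∀ (i : ℕ) (x : ℝ), iteratedDeriv i f x
      = iteratedDeriv i (fun x : ℝ => δ * x) x
        + iteratedDeriv i (fun x : ℝ => -(a ^ r) * u (a⁻¹ * x)) x := by
    intro i x
    have hfeq : f = (fun x : ℝ => δ * x) + (fun x : ℝ => -(a ^ r) * u (a⁻¹ * x)) := rfl
    rw [hfeq]
    simp only [← iteratedDerivWithin_univ]
    exact iteratedDerivWithin_add (Set.mem_univ x) uniqueDiffOn_univ
      (contDiffOn_univ.mpr (hl_smooth.of_le (hcastle i)) x (Set.mem_univ x))
      (contDiffOn_univ.mpr (hw_smooth.of_le (hcastle i)) x (Set.mem_univ x))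
  have hwconst : ∀ (i : ℕ) (x : ℝ), iteratedDeriv i (fun x : ℝ => -(a ^ r) * u (a⁻¹ * x)) x
      = -(a ^ r) * ((a⁻¹) ^ i *
          ((Tstep^[i] (X ^ r : Polynomial ℝ)).eval (a⁻¹ * x) * Real.exp (-(a⁻¹ * x) ^ 2))) := by
    intro i x
    have h1 : iteratedDeriv i (fun x : ℝ => -(a ^ r) * u (a⁻¹ * x)) x
        = -(a ^ r) * iteratedDeriv i (fun x => u (a⁻¹ * x)) x := by
      simp only [← iteratedDerivWithin_univ]
      exact iteratedDerivWithin_const_mul (Set.mem_univ x) uniqueDiffOn_univ _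
        (contDiffOn_univ.mpr ((hu_smooth.comp (contDiff_const.mul contDiff_id)).of_le (hcastle i)) x (Set.mem_univ x))
    rw [h1, hscale i]
    rw [hu_deriv i]
  have haar : a ^ r * (a⁻¹) ^ r = 1 := by
    rw [← mul_pow, mul_inv_cancel₀ ha0.ne', one_pow]
  -- derivative values of f at 0
  have hDf : ∀ i : ℕ, i ≤ r → iteratedDeriv i f 0
      = (if i = 1 then δ else 0) + (if i = r then -(r.factorial : ℝ) else 0) := by
    intro i hi
    rcases Nat.eq_zero_or_pos i with rfl | hipos
    · simp only [iteratedDeriv_zero]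
      rw [hpoint 0, if_neg (by omega : ¬ (0:ℕ) = 1), if_neg (by omega : ¬ (0:ℕ) = r)]
      simp [zero_pow (by omega : r ≠ 0)]
    · rw [hw_add i 0, hwconst i 0]
      have hzero : a⁻¹ * (0:ℝ) = 0 := by ring
      rw [hzero]
      rcases eq_or_ne i r with rfl | hir
      · obtain ⟨s, hs, he⟩ := Tpow_eval_zero i i le_rfl
        have hll : iteratedDeriv i (fun x : ℝ => δ * x) 0 = 0 := by
          rw [hlderiv i (by omega)]
        have he0 : (Tstep^[i] ((X : Polynomial ℝ) ^ i)).eval 0 = (i.factorial : ℝ) := by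
          rw [hs, Nat.sub_self, pow_zero, one_mul, he, Nat.descFactorial_self]
        rw [hll, he0, if_neg (by omega : ¬ i = 1), if_pos rfl]
        have hE : Real.exp (-(0:ℝ) ^ 2) = 1 := by norm_num
        rw [hE]
        linear_combination (-(i.factorial : ℝ)) * haar
      · obtain ⟨s, hs, _⟩ := Tpow_eval_zero r i hi
        rw [hs]
        have hri : r - i ≠ 0 := by omega
        have hev : ((X:Polynomial ℝ) ^ (r - i) * s).eval 0 = 0 := by
          simp [zero_pow hri]
        rw [hev]
        rcases eq_or_ne i 1 with rfl | hi1
        · rw [iteratedDeriv_one, hd1]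
          simp [hir]
        · rw [hlderiv i (by omega)]
          simp [hi1, hir]
  -- coefficients of P
  have hkey : ∀ i : ℕ, i ≤ r → ((i.factorial : ℝ)) * P.coeff i = iteratedDeriv i f 0 := by
    intro i hi
    have h1 := hPmatch i hi
    rw [itDW_eq_itD f hf_smooth i 0 h0mem] at h1
    rw [← h1, ← coeff_zero_eq_eval_zero, Polynomial.coeff_iterate_derivative]
    simp [Nat.descFactorial_self, nsmul_eq_mul]
  have hc0 : P.coeff 0 = 0 := by
    have h1 := hkey 0 (by omega)
    rw [hDf 0 (by omega), if_neg (by omega : ¬ (0:ℕ) = 1),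
      if_neg (by omega : ¬ (0:ℕ) = r)] at h1
    simpa using h1
  have hc1 : P.coeff 1 = δ := by
    have h1 := hkey 1 (by omega)
    rw [hDf 1 (by omega), if_pos rfl, if_neg (by omega : ¬ (1:ℕ) = r)] at h1
    simpa using h1
  have hci : ∀ i : ℕ, 2 ≤ i → i < r → P.coeff i = 0 := by
    intro i h2i hir
    have h1 := hkey i (by omega)
    rw [hDf i (by omega), if_neg (by omega : ¬ i = 1), if_neg (by omega : ¬ i = r)] at h1
    have h0 : ((i.factorial : ℝ)) * P.coeff i = 0 := by simpa using h1
    have hfne : ((i.factorial : ℝ)) ≠ 0 := by exact_mod_cast i.factorial_ne_zero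
    exact (mul_eq_zero.mp h0).resolve_left hfne
  have hcr : P.coeff r = -1 := by
    have h1 := hkey r le_rfl
    rw [hDf r le_rfl, if_neg (by omega : ¬ r = 1), if_pos rfl] at h1
    have hfne : ((r.factorial : ℝ)) ≠ 0 := by exact_mod_cast r.factorial_ne_zero
    have h2 : ((r.factorial : ℝ)) * P.coeff r = ((r.factorial : ℝ)) * (-1) := by
      rw [h1]; ring
    exact mul_left_cancel₀ hfne h2
  -- the polynomial Rp
  set Rp : Polynomial ℝ := P - (C δ * X - X ^ r) with hRpdef
  have hRc : ∀ j : ℕ, j ≤ r → Rp.coeff j = 0 := by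
    intro j hj
    simp only [hRpdef, coeff_sub, coeff_C_mul, coeff_X_pow]
    rcases eq_or_ne j 0 with rfl | hj0
    · rw [coeff_X_zero, if_neg (by omega : ¬ (0 = r)), hc0]
      ring
    rcases eq_or_ne j 1 with rfl | hj1
    · rw [coeff_X_one, if_neg (by omega : ¬ (1 = r)), hc1]
      ring
    rcases eq_or_ne j r with rfl | hjr
    · have hXj : (X : Polynomial ℝ).coeff j = 0 := by
        rw [coeff_X, if_neg (Ne.symm hj1)]
      rw [hXj, if_pos rfl, hcr]
      ring
    · have h2j : 2 ≤ j := by omega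
      have hXj : (X : Polynomial ℝ).coeff j = 0 := by
        rw [coeff_X, if_neg (Ne.symm hj1)]
      rw [hXj, if_neg hjr, hci j h2j (by omega)]
      ring
  have hdegR : Rp.natDegree ≤ n := by
    apply le_trans (natDegree_sub_le _ _)
    apply max_le hPdeg
    apply le_trans (natDegree_sub_le _ _)
    apply max_le
    · apply le_trans (natDegree_C_mul_le _ _)
      simp [natDegree_X]; omega
    · simp [natDegree_X_pow]; omega
  -- copositivity at -h
  have hPh : P.eval (-h) ≤ 0 := by
    apply hPneg
    constructor
    · simp only [neg_lt_neg_iff]; exact hh1n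
    · linarith
  have hRh : Rp.eval (-h) ≤ -(h ^ r / 2) := by
    have h1 : Rp.eval (-h) = P.eval (-h) - (δ * (-h) - (-h) ^ r) := by
      simp [hRpdef]
    have h2 : (-h) ^ r = -(h ^ r) := Odd.neg_pow ⟨k, by omega⟩ h
    have h3 : δ * h = h ^ r / 2 := by
      rw [hδdef]
      have : h ^ (r - 1) * h = h ^ r := by
        rw [← pow_succ]; congr 1; omega
      field_simp
      linarith [this]
    rw [h1, h2]
    nlinarith [hPh]
  -- sup norm bounds
  have hS_le_G : supNorm (iteratedDerivWithin r f (Set.Icc (-1:ℝ) 1)) (-1) 1 ≤ G := by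
    apply Real.sSup_le _ hG0
    rintro y ⟨x, hx, rfl⟩
    show |iteratedDerivWithin r f (Set.Icc (-1:ℝ) 1) x| ≤ G
    rw [itDW_eq_itD f hf_smooth r x hx]
    rw [hw_add r x, hwconst r x, hlderiv r (by omega)]
    have h1 : (0:ℝ) + -(a ^ r) * ((a⁻¹) ^ r *
        (q.eval (a⁻¹ * x) * Real.exp (-(a⁻¹ * x) ^ 2)))
        = -(q.eval (a⁻¹ * x) * Real.exp (-(a⁻¹ * x) ^ 2)) := by
      rw [show -(a ^ r) * ((a⁻¹) ^ r * (q.eval (a⁻¹ * x) * Real.exp (-(a⁻¹ * x) ^ 2)))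
          = -((a ^ r * (a⁻¹) ^ r) * (q.eval (a⁻¹ * x) * Real.exp (-(a⁻¹ * x) ^ 2))) by ring,
        haar]
      ring
    rw [h1, abs_neg]
    exact poly_exp_bound q (a⁻¹ * x)
  have hfCont : Continuous f := hf_smooth.continuous
  have hbdd : BddAbove ((fun x => |f x - P.eval x|) '' Set.Icc (-1:ℝ) 1) :=
    IsCompact.bddAbove_image isCompact_Icc ((hfCont.sub P.continuous_aeval).abs).continuousOn
  have hfP : ∀ x ∈ Set.Icc (-1:ℝ) 1, |f x - P.eval x| ≤ A * G := by
    intro x hx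
    have h1 : |f x - P.eval x| ≤ supNorm (fun x => f x - P.eval x) (-1) 1 :=
      le_csSup hbdd ⟨x, hx, rfl⟩
    have h3 : A * supNorm (iteratedDerivWithin r f (Set.Icc (-1:ℝ) 1)) (-1) 1 ≤ A * G :=
      mul_le_mul_of_nonneg_left hS_le_G hA.le
    linarith [hcon]
  have hRb : ∀ x ∈ Set.Icc (-1:ℝ) 1, |Rp.eval x| ≤ B := by
    intro x hx
    have h1 : Rp.eval x = (P.eval x - f x) + x ^ r * (1 - Real.exp (-(a⁻¹ * x) ^ 2)) := by
      simp only [hRpdef, eval_sub, eval_mul, eval_C, eval_X, eval_pow]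
      rw [hpoint x]; ring
    have hE1 : Real.exp (-(a⁻¹ * x) ^ 2) ≤ 1 :=
      Real.exp_le_one_iff.mpr (neg_nonpos.mpr (sq_nonneg _))
    have hE0 : 0 < Real.exp (-(a⁻¹ * x) ^ 2) := Real.exp_pos _
    have h2 : |x ^ r * (1 - Real.exp (-(a⁻¹ * x) ^ 2))| ≤ 1 := by
      rw [abs_mul]
      have hxr : |x ^ r| ≤ 1 := by
        rw [abs_pow]
        exact pow_le_one₀ (abs_nonneg x) (abs_le.mpr ⟨hx.1, hx.2⟩)
      have hE2 : |1 - Real.exp (-(a⁻¹ * x) ^ 2)| ≤ 1 := by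
        rw [abs_le]; constructor <;> linarith
      nlinarith [abs_nonneg (x ^ r), abs_nonneg (1 - Real.exp (-(a⁻¹ * x) ^ 2))]
    have h3 : |P.eval x - f x| ≤ A * G := by
      rw [abs_sub_comm]; exact hfP x hx
    rw [h1, hBdef]
    calc |(P.eval x - f x) + x ^ r * (1 - Real.exp (-(a⁻¹ * x) ^ 2))|
        ≤ |P.eval x - f x| + |x ^ r * (1 - Real.exp (-(a⁻¹ * x) ^ 2))| := abs_add_le _ _
      _ ≤ A * G + 1 := add_le_add h3 h2
  -- Lagrange interpolation coefficient bound
  have hn1R : ((n:ℝ) + 1) ≠ 0 := by positivity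
  have hvinj : Set.InjOn v ↑sN := by
    intro i _ j _ hij
    simp only [hvdef] at hij
    field_simp at hij
    exact_mod_cast hij
  have hdegR' : Rp.degree < sN.card := by
    rw [hsNdef, Finset.card_range]
    calc Rp.degree ≤ (Rp.natDegree : WithBot ℕ) := degree_le_natDegree
      _ ≤ (n : WithBot ℕ) := by exact_mod_cast hdegR
      _ < ((n + 1 : ℕ) : WithBot ℕ) := by exact_mod_cast Nat.lt_succ_self n
  have hinterp := Lagrange.eq_interpolate hvinj hdegR'
  have hvmem : ∀ i ∈ sN, v i ∈ Set.Icc (-1:ℝ) 1 := by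
    intro i hi
    rw [hsNdef, Finset.mem_range] at hi
    constructor
    · have : (0:ℝ) ≤ (i:ℝ) / (n + 1) := by positivity
      simp only [hvdef]; linarith
    · simp only [hvdef]
      rw [div_le_one (by positivity)]
      have : (i:ℝ) ≤ n := by exact_mod_cast Nat.lt_succ_iff.mp hi
      linarith
  have hcoeffb : ∀ j : ℕ, |Rp.coeff j| ≤ ∑ i ∈ sN, B * |(Lagrange.basis sN v i).coeff j| := by
    intro j
    conv_lhs => rw [hinterp]
    rw [Lagrange.interpolate_apply, Polynomial.finset_sum_coeff]
    refine le_trans (Finset.abs_sum_le_sum_abs _ _) (Finset.sum_le_sum ?_)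
    intro i hi
    rw [coeff_C_mul, abs_mul]
    exact mul_le_mul_of_nonneg_right (hRb (v i) (hvmem i hi)) (abs_nonneg _)
  have hsum : ∑ j ∈ Finset.range (n + 1), |Rp.coeff j| ≤ B * K := by
    calc ∑ j ∈ Finset.range (n + 1), |Rp.coeff j|
        ≤ ∑ j ∈ Finset.range (n + 1), ∑ i ∈ sN, B * |(Lagrange.basis sN v i).coeff j| :=
          Finset.sum_le_sum fun j _ => hcoeffb j
      _ = B * K := by
          rw [hKdef, Finset.mul_sum]
          exact Finset.sum_congr rfl fun j _ => (Finset.mul_sum _ _ _).symm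
  have heval : |Rp.eval (-h)| ≤ h ^ (r + 1) * (B * K) := by
    have hev : Rp.eval (-h) = ∑ j ∈ Finset.range (n + 1), Rp.coeff j * (-h) ^ j :=
      eval_eq_sum_range' (by omega) _
    calc |Rp.eval (-h)| ≤ ∑ j ∈ Finset.range (n + 1), |Rp.coeff j * (-h) ^ j| := by
          rw [hev]; exact Finset.abs_sum_le_sum_abs _ _
      _ ≤ ∑ j ∈ Finset.range (n + 1), |Rp.coeff j| * h ^ (r + 1) := by
          apply Finset.sum_le_sum
          intro j _
          rw [abs_mul, abs_pow, abs_neg, abs_of_pos hh0]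
          rcases le_or_gt j r with hjr | hjr
          · simp [hRc j hjr]
          · exact mul_le_mul_of_nonneg_left
              (pow_le_pow_of_le_one hh0.le hh1 (by omega)) (abs_nonneg _)
      _ = (∑ j ∈ Finset.range (n + 1), |Rp.coeff j|) * h ^ (r + 1) := by
          rw [Finset.sum_mul]
      _ ≤ (B * K) * h ^ (r + 1) :=
          mul_le_mul_of_nonneg_right hsum (by positivity)
      _ = h ^ (r + 1) * (B * K) := by ring
  -- final contradiction
  have hlow : h ^ r / 2 ≤ |Rp.eval (-h)| := by
    calc h ^ r / 2 ≤ -(Rp.eval (-h)) := by linarith [hRh]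
      _ ≤ |Rp.eval (-h)| := neg_le_abs _
  have hfin : h ^ r / 2 ≤ h ^ (r + 1) * (B * K) := le_trans hlow heval
  have hhr : 0 < h ^ r := pow_pos hh0 r
  have h12 : 1 / 2 ≤ h * (B * K) := by
    rw [pow_succ] at hfin
    nlinarith
  have hhB0 : 0 < h * B := by positivity
  nlinarith
end

section
/- Let r ≥ 4 be an EVEN integer. Then for any n ≥ r-1 and any A > 0, there exists f ∈ C^r ∩ Δ^(0)({0}) such that, for every polynomial P_n of degree ≤ n with P_n ∈ Δ^(0)({0}) and satisfying P_n^(i)(0) = f^(i)(0) for all 0 ≤ i ≤ r-1, one has ‖f - P_n‖ > A ‖f^(r)‖. Hence copositive approximation with Hermite interpolation of order r-1 at the sign-change point 0 is impossible for even r ≥ 4. -/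
open Set Polynomial Filter Topology Finset

section Helpers

lemma le_supNorm {g : ℝ → ℝ} {a b x : ℝ} (hg : ContinuousOn g (Set.Icc a b))
    (hx : x ∈ Set.Icc a b) : |g x| ≤ supNorm g a b := by
  have hb : BddAbove ((fun x => |g x|) '' Set.Icc a b) :=
    (isCompact_Icc.image_of_continuousOn hg.abs).bddAbove
  exact le_csSup hb ⟨x, hx, rfl⟩

lemma supNorm_le {g : ℝ → ℝ} {a b C : ℝ} (hab : a ≤ b)
    (h : ∀ x ∈ Set.Icc a b, |g x| ≤ C) : supNorm g a b ≤ C := by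
  apply Real.sSup_le
  · rintro y ⟨x, hx, rfl⟩; exact h x hx
  · exact le_trans (abs_nonneg _) (h a ⟨le_refl a, hab⟩)

lemma supNorm_nonneg {g : ℝ → ℝ} {a b : ℝ} (hab : a ≤ b) : 0 ≤ supNorm g a b := by
  apply Real.sSup_nonneg
  rintro y ⟨x, hx, rfl⟩; exact abs_nonneg _

lemma iteratedDeriv_polyEval (p : Polynomial ℝ) (i : ℕ) :
    iteratedDeriv i (fun y => p.eval y) = fun x => (Polynomial.derivative^[i] p).eval x := by
  induction i with
  | zero => simp [iteratedDeriv_zero]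
  | succ m ih =>
      rw [iteratedDeriv_succ, ih]
      funext x
      rw [Function.iterate_succ_apply']
      exact Polynomial.deriv (p := Polynomial.derivative^[m] p)

lemma iteratedDeriv_zero_fun (m : ℕ) :
    iteratedDeriv m (fun _ : ℝ => (0:ℝ)) = fun _ => (0:ℝ) := by
  rw [iteratedDeriv_eq_iterate]
  exact Function.iterate_fixed (by funext x; simp) m

lemma myIteratedDerivWithin_eq (m : ℕ) {f : ℝ → ℝ} (hf : ContDiff ℝ (⊤:ℕ∞) f) {x : ℝ}
    (hx : x ∈ Set.Icc (-1:ℝ) 1) :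
    iteratedDerivWithin m f (Set.Icc (-1:ℝ) 1) x = iteratedDeriv m f x := by
  rw [iteratedDerivWithin_eq_iteratedFDerivWithin, iteratedDeriv_eq_iteratedFDeriv]
  congr 1
  have h1 := (contDiff_iff_ftaylorSeries.1 hf).hasFTaylorSeriesUpToOn (Set.Icc (-1:ℝ) 1)
  have h2 := h1.eq_iteratedFDerivWithin_of_uniqueDiffOn (m := m) (by exact_mod_cast le_top)
    (uniqueDiffOn_Icc (by norm_num)) hx
  exact h2.symm

lemma coeff_bound (d : ℕ) : ∃ C : ℝ, 0 < C ∧ ∀ p : Polynomial ℝ, p.natDegree ≤ d →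
    ∀ k, |p.coeff k| ≤ C * supNorm (fun x => p.eval x) (-1) 1 := by
  classical
  set s : Finset ℕ := Finset.range (d+1) with hs
  set v : ℕ → ℝ := fun j => (j : ℝ)/(d+1) with hv
  have hinj : Set.InjOn v ↑s := by
    intro a _ b _ hab
    have hd1 : ((d:ℝ)+1) ≠ 0 := by positivity
    have hab : (a:ℝ)/(d+1) = (b:ℝ)/(d+1) := hab
    rw [div_left_inj' hd1] at hab
    exact_mod_cast hab
  set B : ℝ := ∑ j ∈ s, (∑ m ∈ Finset.range (d+1), |(Lagrange.basis s v j).coeff m|) with hB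
  refine ⟨B + 1, by positivity, ?_⟩
  intro p hpd k
  have hsup0 : 0 ≤ supNorm (fun x => p.eval x) (-1) 1 := supNorm_nonneg (by norm_num)
  by_cases hk : d < k
  · rw [Polynomial.coeff_eq_zero_of_natDegree_lt (lt_of_le_of_lt hpd hk)]
    simp only [abs_zero]
    positivity
  push_neg at hk
  have hdeg : p.degree < (s.card : WithBot ℕ) := by
    rw [hs, Finset.card_range]
    exact lt_of_le_of_lt Polynomial.degree_le_natDegree
      (by exact_mod_cast Nat.lt_succ_of_le hpd)
  have hL := Lagrange.eq_interpolate hinj hdeg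
  have hco : p.coeff k = ∑ j ∈ s, (p.eval (v j)) * (Lagrange.basis s v j).coeff k := by
    conv_lhs => rw [hL]
    rw [Lagrange.interpolate_apply, Polynomial.finset_sum_coeff]
    refine Finset.sum_congr rfl fun j _ => ?_
    rw [Polynomial.coeff_C_mul]
  have hvmem : ∀ j ∈ s, v j ∈ Set.Icc (-1:ℝ) 1 := by
    intro j hj
    rw [hs, Finset.mem_range] at hj
    constructor
    · have : (0:ℝ) ≤ (j:ℝ)/(d+1) := by positivity
      simp only [hv]; linarith
    · simp only [hv]
      rw [div_le_one (by positivity)]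
      have : (j:ℝ) ≤ (d:ℝ) + 1 := by exact_mod_cast Nat.le_succ_of_le (Nat.lt_succ_iff.1 hj)
      linarith
  rw [hco]
  calc |∑ j ∈ s, (p.eval (v j)) * (Lagrange.basis s v j).coeff k|
      ≤ ∑ j ∈ s, |(p.eval (v j)) * (Lagrange.basis s v j).coeff k| := Finset.abs_sum_le_sum_abs _ _
    _ ≤ ∑ j ∈ s, supNorm (fun x => p.eval x) (-1) 1 * |(Lagrange.basis s v j).coeff k| := by
        refine Finset.sum_le_sum fun j hj => ?_
        rw [abs_mul]
        exact mul_le_mul_of_nonneg_right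
          (le_supNorm (Polynomial.continuous p).continuousOn (hvmem j hj)) (abs_nonneg _)
    _ = (∑ j ∈ s, |(Lagrange.basis s v j).coeff k|) * supNorm (fun x => p.eval x) (-1) 1 := by
        rw [Finset.sum_mul]
        refine Finset.sum_congr rfl fun j _ => by ring
    _ ≤ (B+1) * supNorm (fun x => p.eval x) (-1) 1 := by
        refine mul_le_mul_of_nonneg_right ?_ hsup0
        have h1 : ∀ j ∈ s, |(Lagrange.basis s v j).coeff k|
            ≤ ∑ m ∈ Finset.range (d+1), |(Lagrange.basis s v j).coeff m| := by
          intro j hj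
          exact Finset.single_le_sum (f := fun m => |(Lagrange.basis s v j).coeff m|)
            (fun m _ => abs_nonneg _) (Finset.mem_range.2 (Nat.lt_succ_of_le hk))
        calc ∑ j ∈ s, |(Lagrange.basis s v j).coeff k| ≤ B := Finset.sum_le_sum h1
          _ ≤ B + 1 := by linarith

end Helpers

set_option maxHeartbeats 4000000 in
/-- Copositive approximation with interpolation at `Y_s = {0}`, negative result for
`f ∈ C^r` with even `r ≥ 4`: for any `n ≥ r - 1` and `A > 0`, there is
`f ∈ C^r[-1,1] ∩ Δ^(0)({0})` such that any polynomial of degree ≤ n in `Δ^(0)({0})`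
with `P_n^{(i)}(0) = f^{(i)}(0)` for `0 ≤ i ≤ r - 1` satisfies
`‖f - P_n‖ > A ‖f^{(r)}‖`. -/
theorem statement18 (r : ℕ) (hr : 4 ≤ r) (hre : Even r) (n : ℕ) (hn : r - 1 ≤ n)
    (A : ℝ) (hA : 0 < A) :
    ∃ f : ℝ → ℝ, ContDiffOn ℝ r f (Set.Icc (-1 : ℝ) 1) ∧ Delta0Zero f ∧
      ∀ P : Polynomial ℝ, P.natDegree ≤ n →
        Delta0Zero (fun x => P.eval x) →
        (∀ i : ℕ, i ≤ r - 1 → (Polynomial.derivative^[i] P).eval 0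
            = iteratedDerivWithin i f (Set.Icc (-1 : ℝ) 1) 0) →
        A * supNorm (iteratedDerivWithin r f (Set.Icc (-1 : ℝ) 1)) (-1) 1
          < supNorm (fun x => f x - P.eval x) (-1) 1 := by
  classical
  obtain ⟨C, hCpos, hC⟩ := coeff_bound n
  have hodd3 : Odd (r-3) := Nat.Even.sub_odd (by omega) hre (by decide)
  have hodd1 : Odd (r-1) := Nat.Even.sub_odd (by omega) hre (by decide)
  set Ψ : ContDiffBump (0:ℝ) := ⟨1/4, 1/2, by norm_num, by norm_num⟩ with hΨdef
  set F : ℝ → ℝ := fun t => t^(r-3) * ((1 - t^2) * Ψ t) with hFdef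
  have hΨc : ContDiff ℝ (⊤:ℕ∞) (fun t : ℝ => Ψ t) := Ψ.contDiff
  have hF : ContDiff ℝ (⊤:ℕ∞) F :=
    (contDiff_id.pow _).mul ((contDiff_const.sub (contDiff_id.pow 2)).mul hΨc)
  have hFzero : ∀ t : ℝ, (1:ℝ)/2 ≤ |t| → F t = 0 := by
    intro t ht
    have : Ψ t = 0 := Ψ.zero_of_le_dist (by rw [Real.dist_eq, sub_zero]; exact ht)
    simp [hFdef, this]
  have hFr_cont : Continuous (iteratedDeriv r F) :=
    hF.continuous_iteratedDeriv r (by exact_mod_cast le_top)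
  obtain ⟨CF0, hCF0⟩ :=
    isCompact_Icc.exists_bound_of_continuousOn
      (s := Set.Icc (-1:ℝ) 1) hFr_cont.continuousOn
  set CF : ℝ := max CF0 0 with hCFdef
  have hCFnn : 0 ≤ CF := le_max_right _ _
  have hFr_zero : ∀ t : ℝ, 1 < |t| → iteratedDeriv r F t = 0 := by
    intro t ht
    have hev : F =ᶠ[𝓝 t] (fun _ => (0:ℝ)) := by
      filter_upwards [Metric.ball_mem_nhds t (by linarith : (0:ℝ) < |t| - 1/2)] with y hy
      rw [Metric.mem_ball, Real.dist_eq] at hy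
      apply hFzero
      have := abs_sub_abs_le_abs_sub t y
      have h2 : |t - y| = |y - t| := abs_sub_comm t y
      linarith
    rw [hev.iteratedDeriv_eq r, iteratedDeriv_zero_fun r]
  have hFr_bd : ∀ t : ℝ, |iteratedDeriv r F t| ≤ CF := by
    intro t
    by_cases ht : |t| ≤ 1
    · have := hCF0 t (abs_le.1 ht)
      rw [Real.norm_eq_abs] at this
      exact le_trans this (le_max_left _ _)
    · push_neg at ht
      rw [hFr_zero t ht]
      simpa using hCFnn
  have hFle1 : ∀ t : ℝ, |F t| ≤ 1 := by
    intro t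
    by_cases ht : |t| ≤ 1
    · have h1 : |t^(r-3)| ≤ 1 := by
        rw [abs_pow]; exact pow_le_one₀ (abs_nonneg t) ht
      have h2 : |1 - t^2| ≤ 1 := by
        rw [abs_le] at ht ⊢
        constructor <;> nlinarith [ht.1, ht.2]
      have h3 : |(Ψ t : ℝ)| ≤ 1 := by
        rw [abs_of_nonneg Ψ.nonneg]; exact Ψ.le_one
      calc |F t| = |t^(r-3)| * (|1 - t^2| * |Ψ t|) := by rw [hFdef]; simp [abs_mul]
        _ ≤ 1 * (1 * 1) := by
            apply mul_le_mul h1 _ (by positivity) (by norm_num)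
            apply mul_le_mul h2 h3 (abs_nonneg _) (by norm_num)
        _ = 1 := by norm_num
    · push_neg at ht
      rw [hFzero t (by linarith)]
      norm_num
  set E : ℝ := 16*((n:ℝ)+1)*C with hE
  have hEpos : 0 < E := by positivity
  have hACF : 0 < A*CF + 4 := by nlinarith
  set δ : ℝ := min (1/4) (3/(E*(A*CF+4))) with hδdef
  have hδ0 : 0 < δ := lt_min (by norm_num) (by positivity)
  have hδ14 : δ ≤ 1/4 := min_le_left _ _
  have hδ1 : δ ≤ 1 := by linarith
  have hδne : δ ≠ 0 := ne_of_gt hδ0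
  have hδr : δ ≤ 3/(E*(A*CF+4)) := min_le_right _ _
  set f : ℝ → ℝ := fun x => δ^(r-1) * F (δ⁻¹ * x) with hfdef
  have hG : ContDiff ℝ (⊤:ℕ∞) (fun x : ℝ => F (δ⁻¹ * x)) :=
    hF.comp (contDiff_const.mul contDiff_id)
  have hfC : ContDiff ℝ (⊤:ℕ∞) f := contDiff_const.mul hG
  -- iterated derivative scaling formula
  have hfD : ∀ x : ℝ, iteratedDeriv r f x
      = δ^(r-1) * ((δ⁻¹)^r * iteratedDeriv r F (δ⁻¹ * x)) := by
    intro x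
    have h1 : iteratedDeriv r f x = δ^(r-1) * iteratedDeriv r (fun x : ℝ => F (δ⁻¹ * x)) x := by
      simp only [hfdef, ← iteratedDerivWithin_univ]
      exact iteratedDerivWithin_const_mul (Set.mem_univ x) uniqueDiffOn_univ _
        (hG.contDiffWithinAt.of_le (by exact_mod_cast le_top : ((r:ℕ):WithTop ℕ∞) ≤ ((⊤:ℕ∞):WithTop ℕ∞)))
    rw [h1, iteratedDeriv_comp_const_mul (hF.of_le (by exact_mod_cast le_top : ((r:ℕ):WithTop ℕ∞) ≤ ((⊤:ℕ∞):WithTop ℕ∞))) δ⁻¹]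
  -- the Taylor polynomial
  set Tp : Polynomial ℝ := Polynomial.C (δ^2) * Polynomial.X^(r-3) - Polynomial.X^(r-1)
    with hTp
  have hTeval : ∀ x : ℝ, Tp.eval x = δ^2 * x^(r-3) - x^(r-1) := by
    intro x; simp [hTp]
  -- f equals Tp near 0
  have hfT : ∀ x : ℝ, |x| < δ/4 → f x = Tp.eval x := by
    intro x hx
    have ht : |δ⁻¹ * x| ≤ 1/4 := by
      rw [abs_mul, abs_of_nonneg (by positivity : (0:ℝ) ≤ δ⁻¹)]
      rw [show (1:ℝ)/4 = δ⁻¹ * (δ/4) by field_simp]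
      exact mul_le_mul_of_nonneg_left hx.le (by positivity)
    have hΨ1 : (Ψ (δ⁻¹ * x) : ℝ) = 1 := by
      apply Ψ.one_of_mem_closedBall
      rw [Metric.mem_closedBall, Real.dist_eq, sub_zero]
      exact ht
    have hmul : δ * (δ⁻¹ * x) = x := by field_simp
    have e1 : r - 1 = (r-3) + 2 := by omega
    have h2 : δ^(r-3) * (δ⁻¹*x)^(r-3) = x^(r-3) := by rw [← mul_pow, hmul]
    have h3 : δ^2 * (δ⁻¹*x)^2 = x^2 := by rw [← mul_pow, hmul]
    show δ ^ (r-1) * F (δ⁻¹ * x) = Tp.eval x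
    rw [hTeval]
    simp only [hFdef]
    rw [hΨ1, e1, pow_add]
    calc δ^(r-3) * δ^2 * ((δ⁻¹*x)^(r-3) * ((1 - (δ⁻¹*x)^2) * 1))
        = (δ^(r-3) * (δ⁻¹*x)^(r-3)) * (δ^2 - δ^2*(δ⁻¹*x)^2) := by ring
      _ = x^(r-3) * (δ^2 - x^2) := by rw [h2, h3]
      _ = δ^2 * x^(r-3) - x^(r-3)*x^2 := by ring
      _ = δ^2 * x^(r-3) - x^((r-3)+2) := by rw [pow_add]
  -- jet of f at 0
  have hjet : ∀ i : ℕ, i ≤ r - 1 →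
      iteratedDerivWithin i f (Set.Icc (-1:ℝ) 1) 0 = (Polynomial.derivative^[i] Tp).eval 0 := by
    intro i _
    have h0 : (0:ℝ) ∈ Set.Icc (-1:ℝ) 1 := by norm_num
    rw [myIteratedDerivWithin_eq i hfC h0]
    have hev : f =ᶠ[𝓝 (0:ℝ)] (fun y => Tp.eval y) := by
      filter_upwards [Metric.ball_mem_nhds (0:ℝ) (by positivity : (0:ℝ) < δ/4)] with y hy
      rw [Metric.mem_ball, Real.dist_eq, sub_zero] at hy
      exact hfT y hy
    rw [hev.iteratedDeriv_eq i, iteratedDeriv_polyEval]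
  -- sign of f
  have hfΔ : Delta0Zero f := by
    have hFsign : ∀ t : ℝ, 0 ≤ t → 0 ≤ F t := by
      intro t ht
      by_cases ht1 : t ≤ 1
      · simp only [hFdef]
        have h1 : (0:ℝ) ≤ t^(r-3) := pow_nonneg ht _
        have h2 : (0:ℝ) ≤ 1 - t^2 := by nlinarith
        exact mul_nonneg h1 (mul_nonneg h2 Ψ.nonneg)
      · push_neg at ht1
        rw [hFzero t (by rw [abs_of_nonneg ht]; linarith)]
    have hFsign' : ∀ t : ℝ, t ≤ 0 → F t ≤ 0 := by
      intro t ht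
      by_cases ht1 : -1 ≤ t
      · simp only [hFdef]
        have h1 : t^(r-3) ≤ 0 := Odd.pow_nonpos hodd3 ht
        have h2 : (0:ℝ) ≤ 1 - t^2 := by nlinarith
        have h3 : (0:ℝ) ≤ (1 - t^2) * Ψ t := mul_nonneg h2 Ψ.nonneg
        exact mul_nonpos_of_nonpos_of_nonneg h1 h3
      · push_neg at ht1
        rw [hFzero t (by rw [abs_of_nonpos ht]; linarith)]
    constructor
    · intro x hx
      show δ^(r-1) * F (δ⁻¹ * x) ≤ 0
      have : F (δ⁻¹ * x) ≤ 0 := hFsign' _ (mul_nonpos_of_nonneg_of_nonpos (by positivity) hx.2)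
      exact mul_nonpos_of_nonneg_of_nonpos (by positivity) this
    · intro x hx
      show 0 ≤ δ^(r-1) * F (δ⁻¹ * x)
      have : 0 ≤ F (δ⁻¹ * x) := hFsign _ (mul_nonneg (by positivity) hx.1)
      positivity
  refine ⟨f, (hfC.of_le (by exact_mod_cast le_top)).contDiffOn, hfΔ, ?_⟩
  intro P hPdeg hPΔ hPint
  -- X^r divides P - Tp
  set Rp : Polynomial ℝ := P - Tp with hRp
  have hcoeff : ∀ i, i < r → Rp.coeff i = 0 := by
    intro i hi
    have hi' : i ≤ r - 1 := by omega
    have h1 := hPint i hi'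
    rw [hjet i hi'] at h1
    have h2 : ((Polynomial.derivative^[i]) Rp).eval 0 = 0 := by
      rw [hRp, Polynomial.iterate_derivative_sub, Polynomial.eval_sub, h1, sub_self]
    rw [← Polynomial.coeff_zero_eq_eval_zero, Polynomial.coeff_iterate_derivative] at h2
    simp only [Nat.zero_add, Nat.descFactorial_self, nsmul_eq_mul] at h2
    have hfac : ((i.factorial : ℝ)) ≠ 0 := by
      exact_mod_cast Nat.factorial_ne_zero i
    exact (mul_eq_zero.1 h2).resolve_left hfac
  obtain ⟨q, hq⟩ : (Polynomial.X : Polynomial ℝ)^r ∣ Rp :=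
    Polynomial.X_pow_dvd_iff.2 hcoeff
  have hTdeg : Tp.natDegree ≤ r - 1 := by
    apply le_trans (Polynomial.natDegree_sub_le _ _)
    apply max_le
    · exact le_trans (Polynomial.natDegree_C_mul_le _ _)
        (by rw [Polynomial.natDegree_X_pow]; omega)
    · rw [Polynomial.natDegree_X_pow]
  have hRdeg : Rp.natDegree ≤ n :=
    le_trans (Polynomial.natDegree_sub_le _ _) (max_le hPdeg (le_trans hTdeg hn))
  have hqdeg : q.natDegree ≤ n := by
    by_cases hq0 : q = 0
    · simp [hq0]
    · have h1 := Polynomial.natDegree_mul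
        (pow_ne_zero r (Polynomial.X_ne_zero (R := ℝ))) hq0
      rw [hq, h1, Polynomial.natDegree_X_pow] at hRdeg
      omega
  have hPeval : ∀ x : ℝ, P.eval x = δ^2 * x^(r-3) - x^(r-1) + x^r * q.eval x := by
    intro x
    have : P = Tp + Polynomial.X^r * q := by rw [← hq, hRp]; ring
    rw [this]
    simp [hTeval]
  -- point constraints at ± 2δ
  have h2d : (0:ℝ) < 2*δ := by linarith
  have h2d1 : 2*δ ≤ 1 := by linarith
  have hyp3 : (0:ℝ) < (2*δ)^(r-3) := pow_pos h2d _
  have epow1 : ∀ y : ℝ, y^(r-1) = y^(r-3) * y^2 := by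
    intro y; rw [← pow_add]; congr 1; omega
  have epow2 : ∀ y : ℝ, y^r = y^(r-3) * y^3 := by
    intro y; rw [← pow_add]; congr 1; omega
  have hQ1 : 3*δ^2 ≤ 8*δ^3 * q.eval (2*δ) := by
    have h2 : P.eval (2*δ) = (2*δ)^(r-3) * (δ^2 - 4*δ^2 + 8*δ^3 * q.eval (2*δ)) := by
      rw [hPeval, epow1, epow2]; ring
    have h3 : 0 ≤ (2*δ)^(r-3) * (δ^2 - 4*δ^2 + 8*δ^3 * q.eval (2*δ)) := by
      rw [← h2]; exact hPΔ.2 (2*δ) ⟨le_of_lt h2d, h2d1⟩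
    have h4 : 0 ≤ δ^2 - 4*δ^2 + 8*δ^3 * q.eval (2*δ) := by
      have h5 := div_nonneg h3 (le_of_lt hyp3)
      rwa [mul_div_cancel_left₀ _ (ne_of_gt hyp3)] at h5
    linarith
  have hQ2 : 8*δ^3 * q.eval (-(2*δ)) ≤ -(3*δ^2) := by
    have h1 : P.eval (-(2*δ)) ≤ 0 := hPΔ.1 (-(2*δ)) ⟨by linarith, by linarith⟩
    have h2 : P.eval (-(2*δ)) = (2*δ)^(r-3) * (-(δ^2) + 4*δ^2 + 8*δ^3 * q.eval (-(2*δ))) := by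
      rw [hPeval]
      rw [Odd.neg_pow hodd3, Odd.neg_pow hodd1, Even.neg_pow hre]
      rw [epow1, epow2]; ring
    rw [h2] at h1
    have h4 : -(δ^2) + 4*δ^2 + 8*δ^3 * q.eval (-(2*δ)) ≤ 0 := by
      have h5 := div_nonpos_of_nonpos_of_nonneg h1 (le_of_lt hyp3)
      rwa [mul_comm, mul_div_assoc, div_self (ne_of_gt hyp3), mul_one] at h5
    linarith
  -- coefficient sum lower bound
  set NR : ℝ := supNorm (fun x => Rp.eval x) (-1) 1 with hNRdef
  have hNR0 : 0 ≤ NR := supNorm_nonneg (by norm_num)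
  have hqe : ∀ y : ℝ, q.eval y = ∑ i ∈ Finset.range (n+1), q.coeff i * y^i := by
    intro y
    exact Polynomial.eval_eq_sum_range' (Nat.lt_succ_of_le hqdeg) y
  have hterm : ∀ i ∈ Finset.range (n+1),
      q.coeff i * (2*δ)^i - q.coeff i * (-(2*δ))^i ≤ |q.coeff i| * (4*δ) := by
    intro i _
    have habs : |(2*δ)^i - (-(2*δ))^i| ≤ 4*δ := by
      rcases Nat.even_or_odd i with hie | hio
      · rw [Even.neg_pow hie, sub_self, abs_zero]; linarith
      · rw [Odd.neg_pow hio]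
        have h1 : (0:ℝ) ≤ (2*δ)^i := by positivity
        have h2 : (2*δ)^i ≤ 2*δ := pow_le_of_le_one (by linarith) (by linarith) hio.pos.ne'
        rw [sub_neg_eq_add, abs_of_nonneg (by linarith)]
        linarith
    calc q.coeff i * (2*δ)^i - q.coeff i * (-(2*δ))^i
        = q.coeff i * ((2*δ)^i - (-(2*δ))^i) := by ring
      _ ≤ |q.coeff i * ((2*δ)^i - (-(2*δ))^i)| := le_abs_self _
      _ = |q.coeff i| * |(2*δ)^i - (-(2*δ))^i| := abs_mul _ _
      _ ≤ |q.coeff i| * (4*δ) := mul_le_mul_of_nonneg_left habs (abs_nonneg _)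
  have hcoefbd : ∀ i ∈ Finset.range (n+1), |q.coeff i| ≤ C * NR := by
    intro i _
    have h1 : q.coeff i = Rp.coeff (i + r) := by
      rw [hq, Polynomial.coeff_X_pow_mul]
    rw [h1, hNRdef]
    exact hC Rp hRdeg (i + r)
  have hsum : q.eval (2*δ) - q.eval (-(2*δ)) ≤ ((n:ℝ)+1) * (C * NR) * (4*δ) := by
    rw [hqe, hqe, ← Finset.sum_sub_distrib]
    calc ∑ i ∈ Finset.range (n+1), (q.coeff i * (2*δ)^i - q.coeff i * (-(2*δ))^i)
        ≤ ∑ i ∈ Finset.range (n+1), |q.coeff i| * (4*δ) := Finset.sum_le_sum hterm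
      _ ≤ ∑ i ∈ Finset.range (n+1), (C * NR) * (4*δ) := by
          refine Finset.sum_le_sum fun i hi => ?_
          exact mul_le_mul_of_nonneg_right (hcoefbd i hi) (by linarith)
      _ = ((n:ℝ)+1) * ((C * NR) * (4*δ)) := by
          rw [Finset.sum_const, Finset.card_range, nsmul_eq_mul]
          push_cast
          ring
      _ = ((n:ℝ)+1) * (C * NR) * (4*δ) := by ring
  -- lower bound on NR
  have hNRlb : 3 ≤ E * δ^2 * NR := by
    have h1 : 6*δ^2 ≤ 8*δ^3 * (q.eval (2*δ) - q.eval (-(2*δ))) := by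
      have : 8*δ^3 * (q.eval (2*δ) - q.eval (-(2*δ)))
          = 8*δ^3 * q.eval (2*δ) - 8*δ^3 * q.eval (-(2*δ)) := by ring
      rw [this]; linarith
    have h2 : 8*δ^3 * (q.eval (2*δ) - q.eval (-(2*δ)))
        ≤ 8*δ^3 * (((n:ℝ)+1) * (C * NR) * (4*δ)) :=
      mul_le_mul_of_nonneg_left hsum (by positivity)
    have h3 : 6*δ^2 ≤ 32*δ^4*(((n:ℝ)+1) * (C * NR)) := by
      have he : 8*δ^3 * (((n:ℝ)+1) * (C * NR) * (4*δ)) = 32*δ^4*(((n:ℝ)+1) * (C * NR)) := by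
        ring
      rw [he] at h2; linarith
    have h4 : 0 < δ^2 := by positivity
    have h5 : 6*δ^2 ≤ (2*(E * δ^2 * NR))*δ^2 := by
      have he2 : (2*(E * δ^2 * NR))*δ^2 = 32*δ^4*(((n:ℝ)+1) * (C * NR)) := by
        rw [hE]; ring
      rw [he2]; linarith
    have h6 : 6 ≤ 2*(E * δ^2 * NR) := le_of_mul_le_mul_right (by linarith [h5]) h4
    linarith
    -- upper bound NR by error + constants
  set SFP : ℝ := supNorm (fun x => f x - P.eval x) (-1) 1 with hSFP
  have hfcont : Continuous f := hfC.continuous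
  have htri : ∀ a b : ℝ, |a - b| ≤ |a| + |b| := by
    intro a b
    rw [sub_eq_add_neg]
    exact le_trans (abs_add_le _ _) (by rw [abs_neg])
  have hNRub : NR ≤ SFP + 3 := by
    apply supNorm_le (by norm_num)
    intro x hx
    have h1 : |f x - P.eval x| ≤ SFP :=
      le_supNorm ((hfcont.sub (Polynomial.continuous P)).continuousOn) hx
    have h2 : |f x| ≤ 1 := by
      show |δ^(r-1) * F (δ⁻¹ * x)| ≤ 1
      rw [abs_mul]
      have h3 : |δ^(r-1)| ≤ 1 := by
        rw [abs_of_nonneg (by positivity)]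
        exact pow_le_one₀ (le_of_lt hδ0) hδ1
      calc |δ^(r-1)| * |F (δ⁻¹*x)| ≤ 1 * 1 :=
            mul_le_mul h3 (hFle1 _) (abs_nonneg _) (by norm_num)
        _ = 1 := by norm_num
    have h4 : |Tp.eval x| ≤ 2 := by
      rw [hTeval]
      have hx1 : |x| ≤ 1 := abs_le.2 ⟨hx.1, hx.2⟩
      have h5 : |x^(r-3)| ≤ 1 := by rw [abs_pow]; exact pow_le_one₀ (abs_nonneg x) hx1
      have h6 : |x^(r-1)| ≤ 1 := by rw [abs_pow]; exact pow_le_one₀ (abs_nonneg x) hx1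
      have h7 : |δ^2 * x^(r-3)| ≤ 1 := by
        rw [abs_mul]
        have h8 : |δ^2| ≤ 1 := by rw [abs_of_nonneg (by positivity)]; nlinarith [hδ14, hδ0]
        calc |δ^2| * |x^(r-3)| ≤ 1*1 := mul_le_mul h8 h5 (abs_nonneg _) (by norm_num)
          _ = 1 := by norm_num
      calc |δ^2 * x^(r-3) - x^(r-1)| ≤ |δ^2*x^(r-3)| + |x^(r-1)| := htri _ _
        _ ≤ 2 := by linarith
    have h8 : Rp.eval x = -((f x - P.eval x)) + (f x - Tp.eval x) := by
      rw [hRp, Polynomial.eval_sub]; ring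
    calc |Rp.eval x| = |(-(f x - P.eval x)) + (f x - Tp.eval x)| := by rw [h8]
      _ ≤ |(-(f x - P.eval x))| + |f x - Tp.eval x| := abs_add_le _ _
      _ = |f x - P.eval x| + |f x - Tp.eval x| := by rw [abs_neg]
      _ ≤ SFP + (|f x| + |Tp.eval x|) := add_le_add h1 (htri _ _)
      _ ≤ SFP + 3 := by linarith
  -- bound on the r-th derivative sup norm
  have hpowid : δ^(r-1) * (δ⁻¹)^r = δ⁻¹ := by
    have h1 : δ^(r-1) * (δ⁻¹)^((r-1)+1) = δ⁻¹ := by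
      rw [pow_succ, ← mul_assoc, ← mul_pow, mul_inv_cancel₀ hδne, one_pow, one_mul]
    have e2 : (r-1)+1 = r := by omega
    rw [e2] at h1
    exact h1
  have hDer : supNorm (iteratedDerivWithin r f (Set.Icc (-1:ℝ) 1)) (-1) 1 ≤ CF * δ⁻¹ := by
    apply supNorm_le (by norm_num)
    intro x hx
    rw [myIteratedDerivWithin_eq r hfC hx, hfD x, ← mul_assoc, hpowid]
    rw [abs_mul, abs_of_nonneg (by positivity : (0:ℝ) ≤ δ⁻¹), mul_comm CF δ⁻¹]
    exact mul_le_mul_of_nonneg_left (hFr_bd _) (by positivity)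
  -- numeric endgame
  have h5 : δ * (E*(A*CF+4)) ≤ 3 := (le_div_iff₀ (by positivity)).1 hδr
  have hEδ : 0 < E*δ := mul_pos hEpos hδ0
  have h8 : E*δ*δ ≤ E*δ*(1/4) := mul_le_mul_of_nonneg_left hδ14 (le_of_lt hEδ)
  have h7 : E*(A*CF*δ + 3*δ^2) < 3 := by nlinarith [h5, h8, hEδ]
  have hkey : A * (CF * δ⁻¹) + 3 < 3 / (E * δ^2) := by
    rw [lt_div_iff₀ (by positivity)]
    have he3 : (A*(CF*δ⁻¹)+3) * (E*δ^2) = E*(A*CF*δ + 3*δ^2) := by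
      field_simp
    rw [he3]
    exact h7
  have hfinal1 : A * supNorm (iteratedDerivWithin r f (Set.Icc (-1:ℝ) 1)) (-1) 1
      ≤ A * (CF*δ⁻¹) := mul_le_mul_of_nonneg_left hDer (le_of_lt hA)
  have hfinal2 : 3/(E*δ^2) ≤ NR := by
    rw [div_le_iff₀ (by positivity)]
    calc (3:ℝ) ≤ E*δ^2*NR := hNRlb
      _ = NR*(E*δ^2) := by ring
  calc A * supNorm (iteratedDerivWithin r f (Set.Icc (-1:ℝ) 1)) (-1) 1
      ≤ A * (CF*δ⁻¹) := hfinal1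
    _ < 3/(E*δ^2) - 3 := by linarith [hkey]
    _ ≤ NR - 3 := by linarith [hfinal2]
    _ ≤ SFP := by linarith [hNRub]
end
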